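/- A symmetric ternary function f = [f₀,f₁,f₂,f₃] is expressible as M∘EQ₃ for some invertible 2×2 complex matrix M if and only if (f₀f₃ − f₁f₂)² − 4(f₁² − f₀f₂)(f₂² − f₁f₃) ≠ 0. (One direction to verify: if f = M∘EQ₃ with M invertible, this polynomial in the values of f is non-zero.) -/

import Mathlib

private lemma cube_root (A : ℂ) : ∃ a : ℂ, a ^ 3 = A :=
  IsAlgClosed.exists_pow_nat_eq A (by norm_num)

/-- From a sum-of-two-geometric representation, build the matrix. -/
private lemma repr_of (f₀ f₁ f₂ f₃ A B r s : ℂ) (hA : A ≠ 0) (hB : B ≠ 0)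
    (hrs : r ≠ s) (h0 : A + B = f₀) (h1 : A * r + B * s = f₁)
    (h2 : A * r ^ 2 + B * s ^ 2 = f₂) (h3 : A * r ^ 3 + B * s ^ 3 = f₃) :
    ∃ a b c d : ℂ, a * d - b * c ≠ 0 ∧
        f₀ = a ^ 3 + b ^ 3 ∧ f₁ = a ^ 2 * c + b ^ 2 * d ∧
        f₂ = a * c ^ 2 + b * d ^ 2 ∧ f₃ = c ^ 3 + d ^ 3 := by
  obtain ⟨a, ha⟩ := cube_root A
  obtain ⟨b, hb⟩ := cube_root B
  have ha0 : a ≠ 0 := fun h => hA (by rw [← ha, h]; ring)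
  have hb0 : b ≠ 0 := fun h => hB (by rw [← hb, h]; ring)
  refine ⟨a, b, r * a, s * b, ?_, ?_, ?_, ?_, ?_⟩
  · intro h
    apply hrs
    have : a * b * (s - r) = 0 := by linear_combination h
    rcases mul_eq_zero.1 this with h' | h'
    · exact absurd h' (mul_ne_zero ha0 hb0)
    · exact (sub_eq_zero.1 h').symm
  · linear_combination -h0 - ha - hb
  · linear_combination -h1 - r * ha - s * hb
  · linear_combination -h2 - r ^ 2 * ha - s ^ 2 * hb
  · linear_combination -h3 - r ^ 3 * ha - s ^ 3 * hb

/-- Case of two distinct eigenvalue ratios `r, s`. -/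
private lemma aux2 (f₀ f₁ f₂ f₃ r s : ℂ) (he : f₁ ^ 2 - f₀ * f₂ ≠ 0) (hrs : r ≠ s)
    (hP : (f₁ ^ 2 - f₀ * f₂) * (r + s) = -(f₀ * f₃ - f₁ * f₂))
    (hQ : (f₁ ^ 2 - f₀ * f₂) * (r * s) = f₂ ^ 2 - f₁ * f₃) :
    ∃ a b c d : ℂ, a * d - b * c ≠ 0 ∧
        f₀ = a ^ 3 + b ^ 3 ∧ f₁ = a ^ 2 * c + b ^ 2 * d ∧
        f₂ = a * c ^ 2 + b * d ^ 2 ∧ f₃ = c ^ 3 + d ^ 3 := by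
  have hd : r - s ≠ 0 := sub_ne_zero.2 hrs
  have hf2 : f₂ = (r + s) * f₁ - (r * s) * f₀ := by
    have h : (f₁ ^ 2 - f₀ * f₂) * f₂ = (f₁ ^ 2 - f₀ * f₂) * ((r + s) * f₁ - (r * s) * f₀) := by
      linear_combination (-f₁) * hP + f₀ * hQ
    exact mul_left_cancel₀ he h
  have hf3 : f₃ = (r + s) * f₂ - (r * s) * f₁ := by
    have h : (f₁ ^ 2 - f₀ * f₂) * f₃ = (f₁ ^ 2 - f₀ * f₂) * ((r + s) * f₂ - (r * s) * f₁) := by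
      linear_combination (-f₂) * hP + f₁ * hQ
    exact mul_left_cancel₀ he h
  have hprod : (f₁ - s * f₀) * (r * f₀ - f₁) * (f₁ ^ 2 - f₀ * f₂)
      = -(f₁ ^ 2 - f₀ * f₂) ^ 2 := by
    linear_combination (f₀ * f₁) * hP - f₀ ^ 2 * hQ
  have hA0 : f₁ - s * f₀ ≠ 0 := by
    intro h
    apply he
    have := hprod
    rw [h] at this
    simpa using (pow_eq_zero_iff (n := 2) (by norm_num)).1 (by linear_combination this)
  have hB0 : r * f₀ - f₁ ≠ 0 := by
    intro h
    apply he
    have := hprod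
    rw [h] at this
    simpa using (pow_eq_zero_iff (n := 2) (by norm_num)).1 (by linear_combination this)
  refine repr_of f₀ f₁ f₂ f₃ ((f₁ - s * f₀) / (r - s)) ((r * f₀ - f₁) / (r - s)) r s
    (div_ne_zero hA0 hd) (div_ne_zero hB0 hd) hrs ?_ ?_ ?_ ?_
  · field_simp; ring
  · field_simp; ring
  · rw [hf2]; field_simp; ring
  · rw [hf3, hf2]; field_simp; ring

private lemma aux3 (f₀ f₁ f₂ f₃ : ℂ)
    (hD : (f₀ * f₃ - f₁ * f₂) ^ 2 -
        4 * (f₁ ^ 2 - f₀ * f₂) * (f₂ ^ 2 - f₁ * f₃) ≠ 0)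
    (he : f₁ ^ 2 - f₀ * f₂ ≠ 0) :
    ∃ a b c d : ℂ, a * d - b * c ≠ 0 ∧
        f₀ = a ^ 3 + b ^ 3 ∧ f₁ = a ^ 2 * c + b ^ 2 * d ∧
        f₂ = a * c ^ 2 + b * d ^ 2 ∧ f₃ = c ^ 3 + d ^ 3 := by
  obtain ⟨δ, hδ⟩ := IsAlgClosed.exists_pow_nat_eq
    ((f₀ * f₃ - f₁ * f₂) ^ 2 - 4 * (f₁ ^ 2 - f₀ * f₂) * (f₂ ^ 2 - f₁ * f₃))
    (n := 2) (by norm_num)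
  have hδ0 : δ ≠ 0 := fun h => hD (by rw [← hδ, h]; ring)
  set r : ℂ := (-(f₀ * f₃ - f₁ * f₂) + δ) / (2 * (f₁ ^ 2 - f₀ * f₂)) with hr
  set s : ℂ := (-(f₀ * f₃ - f₁ * f₂) - δ) / (2 * (f₁ ^ 2 - f₀ * f₂)) with hs
  have hrs : r ≠ s := by
    intro h
    rw [hr, hs, div_eq_div_iff (by simpa using he) (by simpa using he)] at h
    apply hδ0
    have h2 : δ * (2 * (f₁ ^ 2 - f₀ * f₂)) = 0 := by linear_combination (1/2 : ℂ) * h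
    rcases mul_eq_zero.1 h2 with h' | h'
    · exact h'
    · exact absurd h' (by simpa using he)
  apply aux2 f₀ f₁ f₂ f₃ r s he hrs
  · rw [hr, hs]; field_simp; ring
  · rw [hr, hs]; field_simp; linear_combination (-1 : ℂ) * hδ

/-- A symmetric ternary function `f = [f₀,f₁,f₂,f₃]` equals `M∘EQ₃` for some
invertible 2×2 matrix `M = [[a,b],[c,d]]` (i.e. `f = [a³+b³, a²c+b²d, ac²+bd²,
c³+d³]` with `ad−bc ≠ 0`) if and only if
`(f₀f₃ − f₁f₂)² − 4(f₁² − f₀f₂)(f₂² − f₁f₃) ≠ 0`. -/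
theorem ghz_class_characterisation (f₀ f₁ f₂ f₃ : ℂ) :
    (∃ a b c d : ℂ, a * d - b * c ≠ 0 ∧
        f₀ = a ^ 3 + b ^ 3 ∧ f₁ = a ^ 2 * c + b ^ 2 * d ∧
        f₂ = a * c ^ 2 + b * d ^ 2 ∧ f₃ = c ^ 3 + d ^ 3) ↔
      (f₀ * f₃ - f₁ * f₂) ^ 2 -
        4 * (f₁ ^ 2 - f₀ * f₂) * (f₂ ^ 2 - f₁ * f₃) ≠ 0 := by
  constructor
  · rintro ⟨a, b, c, d, h, rfl, rfl, rfl, rfl⟩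
    have hkey : ((a ^ 3 + b ^ 3) * (c ^ 3 + d ^ 3) -
          (a ^ 2 * c + b ^ 2 * d) * (a * c ^ 2 + b * d ^ 2)) ^ 2 -
        4 * ((a ^ 2 * c + b ^ 2 * d) ^ 2 - (a ^ 3 + b ^ 3) * (a * c ^ 2 + b * d ^ 2)) *
          ((a * c ^ 2 + b * d ^ 2) ^ 2 - (a ^ 2 * c + b ^ 2 * d) * (c ^ 3 + d ^ 3)) =
        (a * d - b * c) ^ 6 := by ring
    rw [hkey]
    exact pow_ne_zero 6 h
  · intro hD
    by_cases he2 : f₁ ^ 2 - f₀ * f₂ ≠ 0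
    · exact aux3 f₀ f₁ f₂ f₃ hD he2
    push_neg at he2
    by_cases he0 : f₂ ^ 2 - f₁ * f₃ ≠ 0
    · have hD' : (f₃ * f₀ - f₂ * f₁) ^ 2 -
          4 * (f₂ ^ 2 - f₃ * f₁) * (f₁ ^ 2 - f₂ * f₀) ≠ 0 := fun h =>
        hD (by linear_combination h)
      obtain ⟨a, b, c, d, h, h3, h2, h1, h0⟩ :=
        aux3 f₃ f₂ f₁ f₀ hD' (by intro h; exact he0 (by linear_combination h))
      exact ⟨c, d, a, b, fun hh => h (by linear_combination -hh),
        by linear_combination h0, by linear_combination h1,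
        by linear_combination h2, by linear_combination h3⟩
    push_neg at he0
    -- degenerate case: f₁ = f₂ = 0
    have hf1 : f₁ = 0 := by
      by_contra hf1
      have hf0 : f₀ ≠ 0 := fun h => hf1 (pow_eq_zero_iff (n := 2) (by norm_num)
        |>.1 (by rw [h] at he2; linear_combination he2))
      apply hD
      have h13 : f₁ * (f₀ * f₃ - f₁ * f₂) = 0 := by
        linear_combination (-f₀) * he0 + (-f₂) * he2
      rcases mul_eq_zero.1 h13 with h' | h'
      · exact absurd h' hf1
      · rw [he2, h']; ring
    have hf2 : f₂ = 0 := by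
      have := he0
      rw [hf1] at this
      simpa using (pow_eq_zero_iff (n := 2) (by norm_num)).1 (by linear_combination this)
    rw [hf1, hf2] at hD
    have h03 : f₀ * f₃ ≠ 0 := fun h =>
      hD (by rw [show f₀ * f₃ - 0 * 0 = f₀ * f₃ by ring, h]; ring)
    obtain ⟨a, ha⟩ := cube_root f₀
    obtain ⟨d, hd⟩ := cube_root f₃
    refine ⟨a, 0, 0, d, ?_, by rw [← ha]; ring, by rw [hf1]; ring,
      by rw [hf2]; ring, by rw [← hd]; ring⟩
    intro h
    apply h03
    rw [← ha, ← hd]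
    linear_combination (a ^ 2 * d ^ 2) * h
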